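/- The convolution product on the direct sum of the group algebras of the symmetric groups is associative: for all a, b, c ≥ 0 and all u ∈ ℚ[S_a], v ∈ ℚ[S_b], w ∈ ℚ[S_c], one has (u ⋆ v) ⋆ w = u ⋆ (v ⋆ w) in ℚ[S_{a+b+c}]. -/

import Mathlib

open Finset

/-! ### Standardization (rank) machinery -/

theorem Equiv.Perm.apply_inv_self {α : Type*} (f : Equiv.Perm α) (x : α) : f (f⁻¹ x) = x :=
  Equiv.apply_symm_apply f x

theorem Equiv.Perm.inv_apply_self {α : Type*} (f : Equiv.Perm α) (x : α) : f⁻¹ (f x) = x :=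
  Equiv.symm_apply_apply f x

/-- `stdAux f i` is the rank of `f i` among the values of `f`. -/
def stdAux {N a : ℕ} (f : Fin a → Fin N) (i : Fin a) : Fin a :=
  ⟨#(univ.filter fun j => f j < f i), by
    have hsub : (univ.filter fun j => f j < f i) ⊆ univ.erase i := by
      intro j hj
      simp only [mem_filter, mem_univ, true_and] at hj
      exact mem_erase.mpr ⟨fun e => absurd (e ▸ hj) (lt_irrefl _), mem_univ j⟩
    calc #(univ.filter fun j => f j < f i) ≤ #((univ : Finset (Fin a)).erase i) :=
          card_le_card hsub
      _ < #(univ : Finset (Fin a)) := card_erase_lt_of_mem (mem_univ i)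
      _ = a := by simp⟩

theorem stdAux_lt_iff {N a : ℕ} (f : Fin a → Fin N) (i j : Fin a) :
    stdAux f i < stdAux f j ↔ f i < f j := by
  constructor
  · intro h
    by_contra hc
    push_neg at hc
    have hsub : (univ.filter fun k => f k < f j) ⊆ univ.filter fun k => f k < f i := by
      intro k hk
      simp only [mem_filter, mem_univ, true_and] at hk ⊢
      exact lt_of_lt_of_le hk hc
    exact absurd (card_le_card hsub) (not_le.mpr h)
  · intro h
    have hss : (univ.filter fun k => f k < f i) ⊂ univ.filter fun k => f k < f j := by
      constructor
      · intro k hk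
        simp only [mem_filter, mem_univ, true_and] at hk ⊢
        exact lt_trans hk h
      · intro hsub
        have : i ∈ univ.filter fun k => f k < f j := by simp [h]
        have := hsub this
        simp at this
    exact Finset.card_lt_card hss

theorem stdAux_injective {N a : ℕ} {f : Fin a → Fin N} (hf : Function.Injective f) :
    Function.Injective (stdAux f) := by
  intro i j h
  apply hf
  apply le_antisymm
  · by_contra hc
    push_neg at hc
    have := (stdAux_lt_iff f j i).mpr hc
    rw [h] at this
    exact lt_irrefl _ this
  · by_contra hc
    push_neg at hc
    have := (stdAux_lt_iff f i j).mpr hc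
    rw [h] at this
    exact lt_irrefl _ this

/-- The standardization of an injective `f : Fin a → Fin N` is a permutation of `Fin a`. -/
noncomputable def std {N a : ℕ} (f : Fin a → Fin N) (hf : Function.Injective f) :
    Equiv.Perm (Fin a) :=
  Equiv.ofBijective (stdAux f) (Finite.injective_iff_bijective.mp (stdAux_injective hf))

theorem std_lt_iff {N a : ℕ} (f : Fin a → Fin N) (hf : Function.Injective f) (i j : Fin a) :
    std f hf i < std f hf j ↔ f i < f j := stdAux_lt_iff f i j

/-- A strictly monotone permutation of `Fin n` is the identity. -/
theorem strictMono_perm_eq_one {n : ℕ} (σ : Equiv.Perm (Fin n))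
    (h : StrictMono (σ : Fin n → Fin n)) : σ = 1 := by
  have := (StrictMono.range_inj h strictMono_id).mp
    (by rw [Set.range_id]; exact Set.range_eq_univ.mpr σ.surjective)
  ext i
  rw [congrFun this i]
  rfl

/-- Two permutations agreeing on all order comparisons are equal. -/
theorem perm_lt_ext {n : ℕ} {σ τ : Equiv.Perm (Fin n)}
    (h : ∀ i j, σ i < σ j ↔ τ i < τ j) : σ = τ := by
  have hm : StrictMono ((σ * τ⁻¹ : Equiv.Perm (Fin n)) : Fin n → Fin n) := by
    intro x y hxy
    show σ (τ⁻¹ x) < σ (τ⁻¹ y)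
    rw [h]
    simpa using hxy
  have := strictMono_perm_eq_one _ hm
  have h2 : σ * τ⁻¹ * τ = 1 * τ := by rw [this]
  simpa [mul_assoc] using h2

attribute [irreducible] std

theorem std_eq_of_lt_iff {N M a : ℕ} {f : Fin a → Fin N} {g : Fin a → Fin M}
    (hf : Function.Injective f) (hg : Function.Injective g)
    (h : ∀ i j, f i < f j ↔ g i < g j) : std f hf = std g hg :=
  perm_lt_ext fun i j => by rw [std_lt_iff, std_lt_iff, h]



open Classical in
/-- The descent set of a permutation `σ ∈ S_n` (1-based convention):
`Desc(σ) = {i ∈ {1,…,n−1} : σ(i) > σ(i+1)}`. -/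
noncomputable def descSet {n : ℕ} (σ : Equiv.Perm (Fin n)) : Finset ℕ :=
  (Finset.Ioo 0 n).filter
    (fun i => ∃ h : i < n, σ ⟨i, h⟩ < σ ⟨i - 1, lt_of_le_of_lt (Nat.sub_le i 1) h⟩)

/-- The Solomon element `D_S^{(n)} = Σ_{σ ∈ S_n, Desc(σ) ⊆ S} σ` of `ℚ[S_n]`. -/
noncomputable def Dle (n : ℕ) (S : Finset ℕ) : MonoidAlgebra ℚ (Equiv.Perm (Fin n)) :=
  ∑ σ ∈ Finset.univ.filter (fun σ : Equiv.Perm (Fin n) => descSet σ ⊆ S),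
    MonoidAlgebra.single σ (1 : ℚ)

/-- The Solomon element `D_{=S}^{(n)} = Σ_{σ ∈ S_n, Desc(σ) = S} σ` of `ℚ[S_n]`. -/
noncomputable def Deq (n : ℕ) (S : Finset ℕ) : MonoidAlgebra ℚ (Equiv.Perm (Fin n)) :=
  ∑ σ ∈ Finset.univ.filter (fun σ : Equiv.Perm (Fin n) => descSet σ = S),
    MonoidAlgebra.single σ (1 : ℚ)

/-- `σ×τ ∈ S_{a+b}`: acts as `σ` on `{1,…,a}` and as `a+τ(·−a)` on `{a+1,…,a+b}`. -/
def mulPerm {a b : ℕ} (σ : Equiv.Perm (Fin a)) (τ : Equiv.Perm (Fin b)) :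
    Equiv.Perm (Fin (a + b)) :=
  (finSumFinEquiv (m := a) (n := b)).permCongr (Equiv.Perm.sumCongr σ τ)

/-- `ζ ∈ Sh(a,b)`: `ζ(1) < ⋯ < ζ(a)` and `ζ(a+1) < ⋯ < ζ(a+b)`. -/
def IsShuffle (a b : ℕ) (ζ : Equiv.Perm (Fin (a + b))) : Prop :=
  (∀ i j : Fin (a + b), i < j → (j : ℕ) < a → ζ i < ζ j) ∧
  (∀ i j : Fin (a + b), i < j → a ≤ (i : ℕ) → ζ i < ζ j)

open Classical in
/-- The convolution product `⋆ : ℚ[S_a] × ℚ[S_b] → ℚ[S_{a+b}]`, the bilinear map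
determined by `σ ⋆ τ = Σ_{ζ ∈ Sh(a,b)} ζ∘(σ×τ)`. -/
noncomputable def conv {a b : ℕ} (u : MonoidAlgebra ℚ (Equiv.Perm (Fin a)))
    (v : MonoidAlgebra ℚ (Equiv.Perm (Fin b))) :
    MonoidAlgebra ℚ (Equiv.Perm (Fin (a + b))) :=
  ∑ σ ∈ u.coeff.support, ∑ τ ∈ v.coeff.support,
    (u.coeff σ * v.coeff τ) •
      ∑ ζ ∈ Finset.univ.filter (fun ζ => IsShuffle a b ζ),
        MonoidAlgebra.single (ζ * mulPerm σ τ) (1 : ℚ)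

/-- The canonical identification `ℚ[S_m] → ℚ[S_n]` for `m = n`. -/
noncomputable def acast {m n : ℕ} (h : m = n)
    (u : MonoidAlgebra ℚ (Equiv.Perm (Fin m))) :
    MonoidAlgebra ℚ (Equiv.Perm (Fin n)) :=
  MonoidAlgebra.ofCoeff (Finsupp.mapDomain (fun σ => (finCongr h).permCongr σ) u.coeff)

/-- The Dynkin element `𝒟_m = Σ_{j=0}^{m−1} (−1)^j D_{={1,…,j}}^{(m)}` of `ℚ[S_m]`. -/
noncomputable def DynE (m : ℕ) : MonoidAlgebra ℚ (Equiv.Perm (Fin m)) :=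
  ∑ j ∈ Finset.range m, (-1 : ℚ) ^ j • Deq m (Finset.Icc 1 j)


/-! ### mulPerm computation and block standardizations -/

theorem mulPerm_castAdd {a b : ℕ} (σ : Equiv.Perm (Fin a)) (τ : Equiv.Perm (Fin b))
    (i : Fin a) : mulPerm σ τ (Fin.castAdd b i) = Fin.castAdd b (σ i) := by
  simp [mulPerm, Equiv.permCongr_apply, finSumFinEquiv_symm_apply_castAdd]

theorem mulPerm_natAdd {a b : ℕ} (σ : Equiv.Perm (Fin a)) (τ : Equiv.Perm (Fin b))
    (j : Fin b) : mulPerm σ τ (Fin.natAdd a j) = Fin.natAdd a (τ j) := by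
  simp [mulPerm, Equiv.permCongr_apply, finSumFinEquiv_symm_apply_natAdd]

theorem mulPerm_inv_castAdd {a b : ℕ} (σ : Equiv.Perm (Fin a)) (τ : Equiv.Perm (Fin b))
    (i : Fin a) : (mulPerm σ τ)⁻¹ (Fin.castAdd b i) = Fin.castAdd b (σ⁻¹ i) := by
  have h := mulPerm_castAdd σ τ (σ⁻¹ i)
  rw [Equiv.Perm.apply_inv_self] at h
  rw [← h, Equiv.Perm.inv_apply_self]

theorem mulPerm_inv_natAdd {a b : ℕ} (σ : Equiv.Perm (Fin a)) (τ : Equiv.Perm (Fin b))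
    (j : Fin b) : (mulPerm σ τ)⁻¹ (Fin.natAdd a j) = Fin.natAdd a (τ⁻¹ j) := by
  have h := mulPerm_natAdd σ τ (τ⁻¹ j)
  rw [Equiv.Perm.apply_inv_self] at h
  rw [← h, Equiv.Perm.inv_apply_self]

theorem castAdd_lt_iff {a b : ℕ} (i j : Fin a) :
    Fin.castAdd b i < Fin.castAdd b j ↔ i < j := Iff.rfl

theorem natAdd_lt_iff {a b : ℕ} (i j : Fin b) :
    Fin.natAdd a i < Fin.natAdd a j ↔ i < j := by
  rw [Fin.lt_def, Fin.lt_def]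
  simp only [Fin.coe_natAdd]
  omega

theorem castAdd_inj' {a b : ℕ} : Function.Injective (Fin.castAdd b : Fin a → Fin (a + b)) :=
  Fin.castAdd_injective a b

theorem natAdd_inj' {a b : ℕ} : Function.Injective (Fin.natAdd a : Fin b → Fin (a + b)) := by
  intro i j h
  have : a + (i : ℕ) = a + (j : ℕ) := congrArg Fin.val h
  exact Fin.ext (Nat.add_left_cancel this)

/-- The standardization of `π` on the first `a` positions. -/
noncomputable def blockL {a b : ℕ} (π : Equiv.Perm (Fin (a + b))) : Equiv.Perm (Fin a) :=
  std (fun i => π (Fin.castAdd b i)) (π.injective.comp castAdd_inj')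

/-- The standardization of `π` on the last `b` positions. -/
noncomputable def blockR {a b : ℕ} (π : Equiv.Perm (Fin (a + b))) : Equiv.Perm (Fin b) :=
  std (fun j => π (Fin.natAdd a j)) (π.injective.comp natAdd_inj')

theorem blockL_lt_iff {a b : ℕ} (π : Equiv.Perm (Fin (a + b))) (i j : Fin a) :
    blockL π i < blockL π j ↔ π (Fin.castAdd b i) < π (Fin.castAdd b j) :=
  std_lt_iff _ _ i j

theorem blockR_lt_iff {a b : ℕ} (π : Equiv.Perm (Fin (a + b))) (i j : Fin b) :
    blockR π i < blockR π j ↔ π (Fin.natAdd a i) < π (Fin.natAdd a j) :=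
  std_lt_iff _ _ i j

attribute [irreducible] blockL blockR

theorem isShuffle_strictMono_left {a b : ℕ} {ζ : Equiv.Perm (Fin (a + b))}
    (h : IsShuffle a b ζ) : StrictMono (fun i : Fin a => ζ (Fin.castAdd b i)) := by
  intro i j hij
  exact h.1 _ _ ((castAdd_lt_iff i j).mpr hij) j.isLt

theorem isShuffle_strictMono_right {a b : ℕ} {ζ : Equiv.Perm (Fin (a + b))}
    (h : IsShuffle a b ζ) : StrictMono (fun j : Fin b => ζ (Fin.natAdd a j)) := by
  intro i j hij
  exact h.2 _ _ ((natAdd_lt_iff i j).mpr hij) (Nat.le_add_right a i)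

/-- Unique factorization: `π (mulPerm σ τ)⁻¹` is a shuffle iff `σ, τ` are the
block standardizations of `π`. -/
theorem isShuffle_mul_inv_iff {a b : ℕ} (π : Equiv.Perm (Fin (a + b)))
    (σ : Equiv.Perm (Fin a)) (τ : Equiv.Perm (Fin b)) :
    IsShuffle a b (π * (mulPerm σ τ)⁻¹) ↔ σ = blockL π ∧ τ = blockR π := by
  constructor
  · intro hsh
    have hπ : ∀ x, π x = (π * (mulPerm σ τ)⁻¹) (mulPerm σ τ x) := by
      intro x; rw [Equiv.Perm.mul_apply, Equiv.Perm.inv_apply_self]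
    constructor
    · refine (perm_lt_ext fun i j => ?_).symm
      rw [blockL_lt_iff, hπ (Fin.castAdd b i), hπ (Fin.castAdd b j),
        mulPerm_castAdd, mulPerm_castAdd]
      exact (isShuffle_strictMono_left hsh).lt_iff_lt
    · refine (perm_lt_ext fun i j => ?_).symm
      rw [blockR_lt_iff, hπ (Fin.natAdd a i), hπ (Fin.natAdd a j),
        mulPerm_natAdd, mulPerm_natAdd]
      exact (isShuffle_strictMono_right hsh).lt_iff_lt
  · rintro ⟨rfl, rfl⟩
    have hL : ∀ x : Fin a, (π * (mulPerm (blockL π) (blockR π))⁻¹) (Fin.castAdd b x)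
        = π (Fin.castAdd b ((blockL π)⁻¹ x)) := by
      intro x; rw [Equiv.Perm.mul_apply, mulPerm_inv_castAdd]
    have hR : ∀ x : Fin b, (π * (mulPerm (blockL π) (blockR π))⁻¹) (Fin.natAdd a x)
        = π (Fin.natAdd a ((blockR π)⁻¹ x)) := by
      intro x; rw [Equiv.Perm.mul_apply, mulPerm_inv_natAdd]
    constructor
    · intro i j hij hja
      have hia : (i : ℕ) < a := lt_trans hij hja
      have hi : i = Fin.castAdd b ⟨(i : ℕ), hia⟩ := Fin.ext rfl
      have hj : j = Fin.castAdd b ⟨(j : ℕ), hja⟩ := Fin.ext rfl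
      rw [hi, hj]
      simp only [hL]
      rw [← blockL_lt_iff, Equiv.Perm.apply_inv_self,
        Equiv.Perm.apply_inv_self]
      exact hij
    · intro i j hij hai
      have haj : a ≤ (j : ℕ) := le_of_lt (lt_of_le_of_lt hai hij)
      have hi : i = Fin.natAdd a ⟨(i : ℕ) - a, by omega⟩ :=
        Fin.ext (by simp only [Fin.coe_natAdd]; omega)
      have hj : j = Fin.natAdd a ⟨(j : ℕ) - a, by omega⟩ :=
        Fin.ext (by simp only [Fin.coe_natAdd]; omega)
      rw [hi, hj]
      simp only [hR]
      have key := blockR_lt_iff π ((blockR π)⁻¹ ⟨(i : ℕ) - a, by omega⟩)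
        ((blockR π)⁻¹ ⟨(j : ℕ) - a, by omega⟩)
      simp only [Equiv.Perm.apply_inv_self] at key
      refine key.mp ?_
      rw [Fin.lt_def] at hij
      rw [Fin.mk_lt_mk]
      omega

/-! ### Coefficient formula for conv -/

open Classical in
theorem conv_apply_coeff {a b : ℕ} (u : MonoidAlgebra ℚ (Equiv.Perm (Fin a)))
    (v : MonoidAlgebra ℚ (Equiv.Perm (Fin b))) (π : Equiv.Perm (Fin (a + b))) :
    (conv u v).coeff π = u.coeff (blockL π) * v.coeff (blockR π) := by
  classical
  have inner : ∀ (σ : Equiv.Perm (Fin a)) (τ : Equiv.Perm (Fin b)),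
      (∑ ζ ∈ Finset.univ.filter (fun ζ => IsShuffle a b ζ),
        (MonoidAlgebra.single (ζ * mulPerm σ τ) (1 : ℚ) :
          MonoidAlgebra ℚ (Equiv.Perm (Fin (a + b))))).coeff π
      = if σ = blockL π ∧ τ = blockR π then 1 else 0 := by
    intro σ τ
    rw [MonoidAlgebra.coeff_sum, Finsupp.finset_sum_apply]
    have step : ∀ ζ : Equiv.Perm (Fin (a + b)),
        (MonoidAlgebra.single (ζ * mulPerm σ τ) (1 : ℚ) :
          MonoidAlgebra ℚ (Equiv.Perm (Fin (a + b)))).coeff π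
        = if ζ = π * (mulPerm σ τ)⁻¹ then 1 else 0 := by
      intro ζ
      rw [MonoidAlgebra.single_apply]
      have hiff : (ζ * mulPerm σ τ = π) ↔ (ζ = π * (mulPerm σ τ)⁻¹) := by
        constructor
        · intro h; rw [← h]; group
        · intro h; rw [h]; group
      exact if_congr hiff rfl rfl
    calc (∑ ζ ∈ Finset.univ.filter (fun ζ => IsShuffle a b ζ),
          (MonoidAlgebra.single (ζ * mulPerm σ τ) (1 : ℚ) :
            MonoidAlgebra ℚ (Equiv.Perm (Fin (a + b)))).coeff π)
        = ∑ ζ ∈ Finset.univ.filter (fun ζ => IsShuffle a b ζ),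
            (if ζ = π * (mulPerm σ τ)⁻¹ then (1 : ℚ) else 0) :=
          Finset.sum_congr rfl fun ζ _ => step ζ
      _ = if π * (mulPerm σ τ)⁻¹ ∈ Finset.univ.filter (fun ζ => IsShuffle a b ζ)
            then (1 : ℚ) else 0 := Finset.sum_ite_eq' _ _ _
      _ = if σ = blockL π ∧ τ = blockR π then 1 else 0 := by
          simp only [Finset.mem_filter, Finset.mem_univ, true_and]
          exact if_congr (isShuffle_mul_inv_iff π σ τ) rfl rfl
  unfold conv
  rw [MonoidAlgebra.coeff_sum, Finsupp.finset_sum_apply]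
  have outer : ∀ σ ∈ u.coeff.support,
      (∑ τ ∈ v.coeff.support, (u.coeff σ * v.coeff τ) •
        ∑ ζ ∈ Finset.univ.filter (fun ζ => IsShuffle a b ζ),
          (MonoidAlgebra.single (ζ * mulPerm σ τ) (1 : ℚ) :
            MonoidAlgebra ℚ (Equiv.Perm (Fin (a + b))))).coeff π
      = (u.coeff σ * v.coeff (blockR π)) * (if σ = blockL π then 1 else 0) := by
    intro σ _
    rw [MonoidAlgebra.coeff_sum, Finsupp.finset_sum_apply]
    have hterm : ∀ τ : Equiv.Perm (Fin b),
        ((u.coeff σ * v.coeff τ) • ∑ ζ ∈ Finset.univ.filter (fun ζ => IsShuffle a b ζ),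
          (MonoidAlgebra.single (ζ * mulPerm σ τ) (1 : ℚ) :
            MonoidAlgebra ℚ (Equiv.Perm (Fin (a + b))))).coeff π
        = (u.coeff σ * v.coeff τ) * (if σ = blockL π ∧ τ = blockR π then 1 else 0) := by
      intro τ
      rw [MonoidAlgebra.coeff_smul, Finsupp.smul_apply, inner σ τ, smul_eq_mul]
    rw [Finset.sum_congr rfl fun τ _ => hterm τ]
    rcases eq_or_ne σ (blockL π) with hσ | hσ
    · subst hσ
      simp only [true_and, if_true, mul_one]
      rw [Finset.sum_eq_single (blockR π)]
      · simp
      · intro τ _ hτ; simp [hτ]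
      · intro h'; simp [Finsupp.notMem_support_iff.mp h']
    · simp [hσ]
  rw [Finset.sum_congr rfl outer]
  rcases eq_or_ne (blockL π) (blockL π) with _ | h
  · rw [Finset.sum_eq_single (blockL π)]
    · simp
    · intro σ _ hσ; simp [hσ]
    · intro h'; simp [Finsupp.notMem_support_iff.mp h']
  · exact absurd rfl h

/-! ### Associativity -/

theorem acast_apply {m n : ℕ} (h : m = n) (X : MonoidAlgebra ℚ (Equiv.Perm (Fin m)))
    (ρ : Equiv.Perm (Fin n)) :
    (acast h X).coeff ρ = X.coeff ((finCongr h).permCongr.symm ρ) := by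
  unfold acast
  exact Finsupp.mapDomain_equiv_apply (f := (finCongr h).permCongr) X.coeff ρ

/-- the convolution product is associative:
`(u ⋆ v) ⋆ w = u ⋆ (v ⋆ w)` in `ℚ[S_{a+b+c}]`. -/
theorem conv_assoc (a b c : ℕ)
    (u : MonoidAlgebra ℚ (Equiv.Perm (Fin a)))
    (v : MonoidAlgebra ℚ (Equiv.Perm (Fin b)))
    (w : MonoidAlgebra ℚ (Equiv.Perm (Fin c))) :
    conv (conv u v) w = acast (Nat.add_assoc a b c).symm (conv u (conv v w)) := by
  classical
  set h : a + (b + c) = a + b + c := (Nat.add_assoc a b c).symm with hh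
  refine MonoidAlgebra.coeff_injective (Finsupp.ext fun π => ?_)
  rw [conv_apply_coeff, conv_apply_coeff, acast_apply]
  set π' : Equiv.Perm (Fin (a + (b + c))) := (finCongr h).permCongr.symm π with hπ'def
  rw [conv_apply_coeff, conv_apply_coeff]
  have hπ' : ∀ x : Fin (a + (b + c)), π' x = Fin.cast h.symm (π (Fin.cast h x)) := by
    intro x
    rw [hπ'def, Equiv.permCongr_symm, Equiv.permCongr_apply]
    simp [finCongr_apply]
  have hlt : ∀ x y : Fin (a + (b + c)),
      π' x < π' y ↔ π (Fin.cast h x) < π (Fin.cast h y) := by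
    intro x y
    rw [hπ' x, hπ' y]
    exact Iff.rfl
  have h1 : blockL (blockL π) = blockL π' := by
    refine perm_lt_ext fun i j => ?_
    have e1 : Fin.cast h (Fin.castAdd (b + c) i) = Fin.castAdd c (Fin.castAdd b i) :=
      Fin.ext (by simp)
    have e2 : Fin.cast h (Fin.castAdd (b + c) j) = Fin.castAdd c (Fin.castAdd b j) :=
      Fin.ext (by simp)
    rw [blockL_lt_iff, blockL_lt_iff, blockL_lt_iff, hlt, e1, e2]
  have h2 : blockR (blockL π) = blockL (blockR π') := by
    refine perm_lt_ext fun i j => ?_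
    have e1 : Fin.cast h (Fin.natAdd a (Fin.castAdd c i)) =
        Fin.castAdd c (Fin.natAdd a i) := Fin.ext (by simp)
    have e2 : Fin.cast h (Fin.natAdd a (Fin.castAdd c j)) =
        Fin.castAdd c (Fin.natAdd a j) := Fin.ext (by simp)
    rw [blockR_lt_iff, blockL_lt_iff, blockL_lt_iff, blockR_lt_iff, hlt, e1, e2]
  have h3 : blockR π = blockR (blockR π') := by
    refine perm_lt_ext fun i j => ?_
    have e1 : Fin.cast h (Fin.natAdd a (Fin.natAdd b i)) =
        Fin.natAdd (a + b) i := Fin.ext (by simp [Nat.add_assoc])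
    have e2 : Fin.cast h (Fin.natAdd a (Fin.natAdd b j)) =
        Fin.natAdd (a + b) j := Fin.ext (by simp [Nat.add_assoc])
    rw [blockR_lt_iff, blockR_lt_iff, blockR_lt_iff, hlt, e1, e2]
  rw [h1, h2, h3, mul_assoc]
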